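/- For every positive integer k and every real number c with 1 ≤ c ≤ 2, the inequality (∑_{i=0}^{k} (1 - i/k) · C(k,i)² · cⁱ) / (∑_{i=0}^{k} C(k,i)² · cⁱ) ≥ 1/3 holds, where C(k,i) denotes the binomial coefficient. -/

import Mathlib

open Finset

lemma choose_succ_mono (k t : ℕ) (h : 2 * t + 1 ≤ k) : k.choose t ≤ k.choose (t + 1) := by
  rcases Nat.lt_or_ge (2 * t + 1) k with h2 | h2
  · exact Nat.choose_le_succ_of_lt_half_left (by omega)
  · have hk : k = 2 * t + 1 := le_antisymm h2 h
    subst hk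
    rw [show t + 1 = (2 * t + 1) - t by omega, Nat.choose_symm (by omega)]

lemma choose_mono_half (k : ℕ) : ∀ m r, r ≤ m → 2 * m ≤ k → k.choose r ≤ k.choose m := by
  intro m
  induction m with
  | zero =>
    intro r h _
    have hr : r = 0 := Nat.le_zero.mp h
    subst hr
    exact le_rfl
  | succ m ih =>
    intro r h hm
    rcases Nat.eq_or_lt_of_le h with he | hl
    · rw [he]
    · exact le_trans (ih r (by omega) (by omega)) (choose_succ_mono k m (by omega))

lemma choose_mono_upto (k r s : ℕ) (h1 : r ≤ s) (h2 : r + s ≤ k) : k.choose r ≤ k.choose s := by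
  rcases Nat.lt_or_ge k (2 * s) with h | h
  · have hs : s ≤ k := by omega
    rw [← Nat.choose_symm hs]
    exact choose_mono_half k (k - s) r (by omega) (by omega)
  · exact choose_mono_half k s r h1 h

lemma binom_sum (n : ℕ) (c : ℝ) :
    ∑ i ∈ range (n + 1), (n.choose i : ℝ) * c ^ i = (c + 1) ^ n := by
  rw [add_pow]
  refine Finset.sum_congr rfl fun i _ => ?_
  rw [one_pow, mul_one, mul_comm]

lemma binom_sum_i (k : ℕ) (hk : 0 < k) (c : ℝ) :
    ∑ i ∈ range (k + 1), (i : ℝ) * (k.choose i : ℝ) * c ^ i = k * c * (c + 1) ^ (k - 1) := by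
  rw [Finset.sum_range_succ']
  have hk1 : k - 1 + 1 = k := Nat.succ_pred_eq_of_pos hk
  have key : ∀ i : ℕ, ((i : ℕ) + 1 : ℝ) * (k.choose (i + 1) : ℝ)
      = (k : ℝ) * ((k - 1).choose i : ℝ) := by
    intro i
    have h := Nat.add_one_mul_choose_eq (k - 1) i
    rw [hk1] at h
    have h2 := congrArg (Nat.cast : ℕ → ℝ) h
    push_cast at h2
    linarith
  have : ∑ i ∈ range k, ((i + 1 : ℕ) : ℝ) * (k.choose (i + 1) : ℝ) * c ^ (i + 1)
      = ∑ i ∈ range k, (k : ℝ) * c * (((k - 1).choose i : ℝ) * c ^ i) := by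
    refine Finset.sum_congr rfl fun i _ => ?_
    have hki := key i
    push_cast
    push_cast at hki
    rw [pow_succ]
    linear_combination (c ^ i * c) * hki
  rw [this, ← Finset.mul_sum]
  have := binom_sum (k - 1) c
  rw [hk1] at this
  rw [this]
  push_cast
  ring

theorem stmt_0 (k : ℕ) (hk : 0 < k) (c : ℝ) (hc1 : 1 ≤ c) (hc2 : c ≤ 2) :
    (∑ i ∈ range (k + 1), (1 - (i : ℝ) / k) * (k.choose i : ℝ) ^ 2 * c ^ i) /
      (∑ i ∈ range (k + 1), (k.choose i : ℝ) ^ 2 * c ^ i) ≥ 1 / 3 := by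
  have hc0 : (0 : ℝ) < c := lt_of_lt_of_le one_pos hc1
  set A : ℝ := ∑ i ∈ range (k + 1), (k.choose i : ℝ) ^ 2 * c ^ i with hA_def
  set B : ℝ := ∑ i ∈ range (k + 1), (i : ℝ) * (k.choose i : ℝ) ^ 2 * c ^ i with hB_def
  set Q : ℝ := ∑ i ∈ range (k + 1), (k.choose i : ℝ) * c ^ i with hQ_def
  set R : ℝ := ∑ i ∈ range (k + 1), (i : ℝ) * (k.choose i : ℝ) * c ^ i with hR_def
  have hA_pos : 0 < A := by
    apply Finset.sum_pos
    · intro i hi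
      have : 0 < (k.choose i : ℝ) := by
        have := Nat.choose_pos (Nat.lt_succ_iff.mp (Finset.mem_range.mp hi))
        exact_mod_cast this
      positivity
    · exact ⟨0, Finset.mem_range.mpr (by omega)⟩
  -- the key correlation inequality: B * Q ≤ A * R
  set F : ℕ → ℕ → ℝ :=
    fun i j => (k.choose i : ℝ) ^ 2 * (k.choose j : ℝ) * c ^ (i + j) * ((j : ℝ) - (i : ℝ))
    with hF_def
  have hS : A * R - B * Q = ∑ i ∈ range (k + 1), ∑ j ∈ range (k + 1), F i j := by
    rw [hA_def, hR_def, hB_def, hQ_def, Finset.sum_mul_sum, Finset.sum_mul_sum,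
      ← Finset.sum_sub_distrib]
    refine Finset.sum_congr rfl fun i _ => ?_
    rw [← Finset.sum_sub_distrib]
    refine Finset.sum_congr rfl fun j _ => ?_
    rw [hF_def]
    ring
  have refl1 : ∀ g : ℕ → ℝ, ∑ i ∈ range (k + 1), g (k - i) = ∑ i ∈ range (k + 1), g i := by
    intro g
    have := Finset.sum_range_reflect g (k + 1)
    simpa using this
  have e1 : (∑ i ∈ range (k + 1), ∑ j ∈ range (k + 1), F j i)
      = ∑ i ∈ range (k + 1), ∑ j ∈ range (k + 1), F i j := Finset.sum_comm
  have e2 : (∑ i ∈ range (k + 1), ∑ j ∈ range (k + 1), F (k - i) (k - j))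
      = ∑ i ∈ range (k + 1), ∑ j ∈ range (k + 1), F i j := by
    rw [refl1 (fun i => ∑ j ∈ range (k + 1), F i (k - j))]
    exact Finset.sum_congr rfl fun i _ => refl1 (fun j => F i j)
  have e3 : (∑ i ∈ range (k + 1), ∑ j ∈ range (k + 1), F (k - j) (k - i))
      = ∑ i ∈ range (k + 1), ∑ j ∈ range (k + 1), F i j :=
    Finset.sum_comm.trans e2
  have hG : ∀ i ∈ range (k + 1), ∀ j ∈ range (k + 1),
      0 ≤ F i j + F j i + F (k - i) (k - j) + F (k - j) (k - i) := by
    intro i hi j hj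
    have hik : i ≤ k := Nat.lt_succ_iff.mp (Finset.mem_range.mp hi)
    have hjk : j ≤ k := Nat.lt_succ_iff.mp (Finset.mem_range.mp hj)
    have hsymi : (k.choose (k - i) : ℝ) = (k.choose i : ℝ) := by rw [Nat.choose_symm hik]
    have hsymj : (k.choose (k - j) : ℝ) = (k.choose j : ℝ) := by rw [Nat.choose_symm hjk]
    have hci : ((k - i : ℕ) : ℝ) = (k : ℝ) - i := by push_cast [hik]; ring
    have hcj : ((k - j : ℕ) : ℝ) = (k : ℝ) - j := by push_cast [hjk]; ring
    have hexp : (k - i) + (k - j) = 2 * k - (i + j) := by omega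
    have hexp2 : (k - j) + (k - i) = 2 * k - (i + j) := by omega
    have hEq : F i j + F j i + F (k - i) (k - j) + F (k - j) (k - i)
        = ((j : ℝ) - i) * ((k.choose i : ℝ) - (k.choose j : ℝ)) * ((k.choose i : ℝ) * (k.choose j : ℝ)) * (c ^ (i + j) - c ^ (2 * k - (i + j))) := by
      rw [hF_def]
      simp only [hsymi, hsymj, hci, hcj, hexp, hexp2]
      ring
    rw [hEq]
    have hab : (0 : ℝ) ≤ (k.choose i : ℝ) * (k.choose j : ℝ) := by positivity
    rcases le_total i j with hij | hij
    · have hji : (0 : ℝ) ≤ (j : ℝ) - i := by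
        have : (i : ℝ) ≤ j := by exact_mod_cast hij
        linarith
      rcases le_total (i + j) k with hk2 | hk2
      · -- a ≤ b and c^(i+j) ≤ c^(2k-(i+j))
        have hab2 : (k.choose i : ℝ) ≤ (k.choose j : ℝ) :=
          Nat.cast_le.mpr (choose_mono_upto k i j hij hk2)
        have hcc : c ^ (i + j) ≤ c ^ (2 * k - (i + j)) :=
          pow_le_pow_right₀ hc1 (by omega)
        have hre : ((j : ℝ) - i) * ((k.choose i : ℝ) - (k.choose j : ℝ)) * ((k.choose i : ℝ) * (k.choose j : ℝ)) * (c ^ (i + j) - c ^ (2 * k - (i + j)))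
            = (((j : ℝ) - i) * ((k.choose j : ℝ) - (k.choose i : ℝ))) * (((k.choose i : ℝ) * (k.choose j : ℝ)) * (c ^ (2 * k - (i + j)) - c ^ (i + j))) := by
          ring
        rw [hre]
        exact mul_nonneg (mul_nonneg hji (by linarith)) (mul_nonneg hab (by linarith))
      · -- b ≤ a and c^(2k-(i+j)) ≤ c^(i+j)
        have hab2 : (k.choose j : ℝ) ≤ (k.choose i : ℝ) := by
          have h' : k.choose j = k.choose (k - j) := (Nat.choose_symm hjk).symm
          have hcu := choose_mono_upto k (k - j) i (by omega) (by omega)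
          rw [← h'] at hcu
          exact Nat.cast_le.mpr hcu
        have hcc : c ^ (2 * k - (i + j)) ≤ c ^ (i + j) :=
          pow_le_pow_right₀ hc1 (by omega)
        exact mul_nonneg (mul_nonneg (mul_nonneg hji (by linarith)) hab) (by linarith)
    · have hji : (0 : ℝ) ≤ (i : ℝ) - j := by
        have : (j : ℝ) ≤ i := by exact_mod_cast hij
        linarith
      rcases le_total (i + j) k with hk2 | hk2
      · have hab2 : (k.choose j : ℝ) ≤ (k.choose i : ℝ) :=
          Nat.cast_le.mpr (choose_mono_upto k j i hij (by omega))
        have hcc : c ^ (i + j) ≤ c ^ (2 * k - (i + j)) :=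
          pow_le_pow_right₀ hc1 (by omega)
        have hre : ((j : ℝ) - i) * ((k.choose i : ℝ) - (k.choose j : ℝ)) * ((k.choose i : ℝ) * (k.choose j : ℝ)) * (c ^ (i + j) - c ^ (2 * k - (i + j)))
            = (((i : ℝ) - j) * ((k.choose i : ℝ) - (k.choose j : ℝ))) * (((k.choose i : ℝ) * (k.choose j : ℝ)) * (c ^ (2 * k - (i + j)) - c ^ (i + j))) := by
          ring
        rw [hre]
        exact mul_nonneg (mul_nonneg hji (by linarith)) (mul_nonneg hab (by linarith))
      · have hab2 : (k.choose i : ℝ) ≤ (k.choose j : ℝ) := by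
          have h' : k.choose i = k.choose (k - i) := (Nat.choose_symm hik).symm
          have hcu := choose_mono_upto k (k - i) j (by omega) (by omega)
          rw [← h'] at hcu
          exact Nat.cast_le.mpr hcu
        have hcc : c ^ (2 * k - (i + j)) ≤ c ^ (i + j) :=
          pow_le_pow_right₀ hc1 (by omega)
        have hre : ((j : ℝ) - i) * ((k.choose i : ℝ) - (k.choose j : ℝ)) * ((k.choose i : ℝ) * (k.choose j : ℝ)) * (c ^ (i + j) - c ^ (2 * k - (i + j)))
            = (((i : ℝ) - j) * ((k.choose j : ℝ) - (k.choose i : ℝ))) * (((k.choose i : ℝ) * (k.choose j : ℝ)) * (c ^ (i + j) - c ^ (2 * k - (i + j)))) := by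
          ring
        rw [hre]
        exact mul_nonneg (mul_nonneg hji (by linarith)) (mul_nonneg hab (by linarith))
  have hS_nonneg : 0 ≤ A * R - B * Q := by
    rw [hS]
    have h4 : (4 : ℝ) * ∑ i ∈ range (k + 1), ∑ j ∈ range (k + 1), F i j
        = ∑ i ∈ range (k + 1), ∑ j ∈ range (k + 1),
            (F i j + F j i + F (k - i) (k - j) + F (k - j) (k - i)) := by
      have : (∑ i ∈ range (k + 1), ∑ j ∈ range (k + 1),
          (F i j + F j i + F (k - i) (k - j) + F (k - j) (k - i)))
          = (∑ i ∈ range (k + 1), ∑ j ∈ range (k + 1), F i j)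
          + (∑ i ∈ range (k + 1), ∑ j ∈ range (k + 1), F j i)
          + (∑ i ∈ range (k + 1), ∑ j ∈ range (k + 1), F (k - i) (k - j))
          + (∑ i ∈ range (k + 1), ∑ j ∈ range (k + 1), F (k - j) (k - i)) := by
        simp only [← Finset.sum_add_distrib]
      rw [this, e1, e2, e3]
      ring
    have hpos : 0 ≤ ∑ i ∈ range (k + 1), ∑ j ∈ range (k + 1),
        (F i j + F j i + F (k - i) (k - j) + F (k - j) (k - i)) :=
      Finset.sum_nonneg fun i hi => Finset.sum_nonneg fun j hj => hG i hi j hj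
    linarith
  -- closed forms for Q and R
  have hQ_eq : Q = (c + 1) ^ k := binom_sum k c
  have hR_eq : R = k * c * (c + 1) ^ (k - 1) := binom_sum_i k hk c
  have hQ_pos : 0 < Q := by rw [hQ_eq]; positivity
  have hk1 : k - 1 + 1 = k := Nat.succ_pred_eq_of_pos hk
  have hpow : (c + 1) ^ k = (c + 1) ^ (k - 1) * (c + 1) := by
    rw [← pow_succ, hk1]
  have hkpos : (0 : ℝ) < k := by exact_mod_cast hk
  have hRQ : R ≤ (2 * k / 3) * Q := by
    rw [hQ_eq, hR_eq, hpow]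
    have hpw : (0 : ℝ) < (c + 1) ^ (k - 1) := by positivity
    have : c ≤ (2 / 3) * (c + 1) := by linarith
    calc (k : ℝ) * c * (c + 1) ^ (k - 1)
        ≤ (k : ℝ) * ((2 / 3) * (c + 1)) * (c + 1) ^ (k - 1) :=
          mul_le_mul_of_nonneg_right (mul_le_mul_of_nonneg_left this hkpos.le) hpw.le
      _ = 2 * k / 3 * ((c + 1) ^ (k - 1) * (c + 1)) := by ring
  have hB_le : B ≤ (2 * k / 3) * A := by
    have h1 : B * Q ≤ A * R := by linarith
    have h2 : A * R ≤ A * ((2 * k / 3) * Q) :=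
      mul_le_mul_of_nonneg_left hRQ (le_of_lt hA_pos)
    have h3 : B * Q ≤ ((2 * k / 3) * A) * Q := by
      calc B * Q ≤ A * ((2 * k / 3) * Q) := le_trans h1 h2
        _ = ((2 * k / 3) * A) * Q := by ring
    exact le_of_mul_le_mul_right h3 hQ_pos
  -- numerator equals A - B / k
  have hN : (∑ i ∈ range (k + 1), (1 - (i : ℝ) / k) * (k.choose i : ℝ) ^ 2 * c ^ i)
      = A - (1 / k) * B := by
    rw [hA_def, hB_def, Finset.mul_sum, ← Finset.sum_sub_distrib]
    refine Finset.sum_congr rfl fun i _ => ?_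
    field_simp
  rw [hN, ge_iff_le, le_div_iff₀ hA_pos]
  have hkne : (k : ℝ) ≠ 0 := ne_of_gt hkpos
  have : (1 / (k : ℝ)) * B ≤ (1 / k) * ((2 * k / 3) * A) := by
    apply mul_le_mul_of_nonneg_left hB_le
    positivity
  have heq : (1 / (k : ℝ)) * ((2 * k / 3) * A) = (2 / 3) * A := by
    field_simp
  rw [heq] at this
  linarith
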